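/- arXiv:1010.2031 — 3 statements merged into one kernel-verified Lean document; each statement's English description precedes it below -/
import Mathlib

section
/- Equip the poset of contexts with the Alexandrov (upper-set) topology, whose open sets are the upward closed sets of contexts. Then the projection π : Σ_* → contexts, (C,λ) ↦ C, is continuous and is a perfect map: it is a closed map (images under π of closed subsets of Σ_* are closed, i.e. downward closed, sets of contexts) and it has compact fibres (each fibre π⁻¹(C), homeomorphic to the compact space Σ_C, is compact). This is the external content of Corollary 2.21, which asserts that the internal Gelfand spectrum is a compact locale. -/
open WeakDual

variable (A : Type*) [CStarAlgebra A]

/-- A classical context: a commutative unital closed star-subalgebra of `A`. -/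
structure Context where
  carrier : Subalgebra ℂ A
  star_mem' : ∀ x ∈ carrier, star x ∈ carrier
  isClosed' : IsClosed (carrier : Set A)
  mul_comm' : ∀ x ∈ carrier, ∀ y ∈ carrier, x * y = y * x

variable {A}

/-- The Gelfand spectrum of a context: the character space of `C`. -/
abbrev Context.Spec (C : Context A) : Type _ := characterSpace ℂ C.carrier

/-- The inclusion of a smaller context into a larger one, as a continuous linear map. -/
def Context.inclCLM {D C : Context A} (h : D.carrier ≤ C.carrier) :
    D.carrier →L[ℂ] C.carrier where
  toLinearMap := (Subalgebra.inclusion h).toLinearMap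
  cont := continuous_induced_rng.mpr continuous_subtype_val

/-- Restriction of a character along an inclusion of contexts. -/
noncomputable def Context.restrictChar {D C : Context A} (h : D.carrier ≤ C.carrier)
    (lam : C.Spec) : D.Spec :=
  ⟨(lam : WeakDual ℂ C.carrier).comp (Context.inclCLM h), by
    constructor
    · intro h0
      have h1 : (lam : WeakDual ℂ C.carrier).comp (Context.inclCLM h) (1 : D.carrier) = 0 := by
        rw [h0]; rfl
      have h2 : (lam : WeakDual ℂ C.carrier).comp (Context.inclCLM h) (1 : D.carrier) = 1 := by
        show lam ((Context.inclCLM h) (1 : D.carrier)) = 1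
        have h3 : (Context.inclCLM h) (1 : D.carrier) = (1 : C.carrier) := rfl
        rw [h3]
        exact map_one lam
      rw [h1] at h2
      exact zero_ne_one h2
    · intro x y
      show lam ((Context.inclCLM h) (x * y)) = lam ((Context.inclCLM h) x) * lam ((Context.inclCLM h) y)
      have h4 : (Context.inclCLM h) (x * y) = (Context.inclCLM h) x * (Context.inclCLM h) y := rfl
      rw [h4]
      exact map_mul lam _ _⟩


/-- The disjoint union of all Gelfand spectra of contexts. -/
abbrev SigmaSpace (A : Type*) [CStarAlgebra A] : Type _ := (C : Context A) × C.Spec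

/-- The Alexandrov topology on the poset of contexts: opens are the upward closed sets. -/
instance : TopologicalSpace (Context A) where
  IsOpen s := ∀ C ∈ s, ∀ D : Context A, C.carrier ≤ D.carrier → D ∈ s
  isOpen_univ := fun _ _ _ _ => trivial
  isOpen_inter := fun s t hs ht C hC D hD => ⟨hs C hC.1 D hD, ht C hC.2 D hD⟩
  isOpen_sUnion := fun S hS C hC D hD => by
    obtain ⟨s, hsS, hCs⟩ := hC
    exact ⟨s, hsS, hS s hsS C hCs D hD⟩

/-- The topology `𝒪 Σ_*` of the covariant approach: a set is open iff each of its fibres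
is open and it is closed under passing to extensions of characters. -/
instance : TopologicalSpace (SigmaSpace A) where
  IsOpen U := (∀ C : Context A, IsOpen {lam : C.Spec | Sigma.mk C lam ∈ U}) ∧
    ∀ (C C' : Context A) (h : C.carrier ≤ C'.carrier) (lam' : C'.Spec),
      Sigma.mk C (Context.restrictChar h lam') ∈ U → Sigma.mk C' lam' ∈ U
  isOpen_univ := ⟨fun _ => isOpen_univ, fun _ _ _ _ _ => trivial⟩
  isOpen_inter := fun U V hU hV => ⟨fun C => (hU.1 C).inter (hV.1 C),
    fun C C' h lam hm => ⟨hU.2 C C' h lam hm.1, hV.2 C C' h lam hm.2⟩⟩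
  isOpen_sUnion := fun S hS => by
    constructor
    · intro C
      have h1 : {lam : C.Spec | Sigma.mk C lam ∈ ⋃₀ S} =
          ⋃ U ∈ S, {lam : C.Spec | Sigma.mk C lam ∈ U} := by
        ext lam; simp
      rw [h1]
      exact isOpen_biUnion fun U hU => (hS U hU).1 C
    · rintro C C' h lam ⟨U, hUS, hmU⟩
      exact ⟨U, hUS, (hS U hUS).2 C C' h lam hmU⟩

lemma context_isOpen_of (s : Set (Context A))
    (h : ∀ C ∈ s, ∀ D : Context A, C.carrier ≤ D.carrier → D ∈ s) : IsOpen s := h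

/-- With the Alexandrov (upper-set) topology on the poset of contexts, the
projection `π : Σ_* → contexts` is continuous and perfect: it is a closed map and every
fibre `π⁻¹(C)` is compact. (Externally, this says that the internal Gelfand spectrum is a
compact locale.) -/
theorem statement10 :
    Continuous (fun p : SigmaSpace A => p.1) ∧
    IsClosedMap (fun p : SigmaSpace A => p.1) ∧
    ∀ C : Context A, IsCompact ((fun p : SigmaSpace A => p.1) ⁻¹' {C}) := by
  refine ⟨?_, ?_, ?_⟩
  · rw [continuous_def]
    intro s hs
    refine ⟨fun C => ?_, fun C C' h lam' hm => ?_⟩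
    · by_cases hC : C ∈ s
      · convert isOpen_univ
        ext lam; simpa using hC
      · convert isOpen_empty
        ext lam; simpa using hC
    · exact hs _ hm _ h
  · intro K hK
    rw [← isOpen_compl_iff] at hK ⊢
    refine context_isOpen_of _ ?_
    intro C hC D hD
    rintro ⟨⟨E, lam'⟩, hpK, hp1⟩
    simp only at hp1
    subst hp1
    have hCc : Sigma.mk C (Context.restrictChar hD lam') ∈ Kᶜ := by
      intro hmem
      exact hC ⟨_, hmem, rfl⟩
    exact hK.2 C E hD lam' hCc hpK
  · intro C
    haveI : CompleteSpace C.carrier := C.isClosed'.completeSpace_coe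
    have hc : Continuous (fun lam : C.Spec => (⟨C, lam⟩ : SigmaSpace A)) := by
      rw [continuous_def]
      intro U hU
      exact hU.1 C
    have heq : (fun p : SigmaSpace A => p.1) ⁻¹' {C} =
        Set.range (fun lam : C.Spec => (⟨C, lam⟩ : SigmaSpace A)) := by
      ext p
      constructor
      · rintro hp
        rcases p with ⟨E, lam⟩
        have : E = C := hp
        subst this
        exact ⟨lam, rfl⟩
      · rintro ⟨lam, rfl⟩
        rfl
    rw [heq]
    exact isCompact_range hc
end

section
/- Let F be a nonempty closed subset of Σ_*. Then F is irreducible (i.e. F cannot be written as the union of two closed proper subsets; equivalently, any two nonempty relatively open subsets of F intersect) if and only if the following two conditions hold: (1) for every context C, the fibre F_C contains at most one point; and (2) for all contexts C₁ and C₂ with F_{C₁} ≠ ∅ and F_{C₂} ≠ ∅, there exists a context C₃ with C₁ ⊆ C₃, C₂ ⊆ C₃ and F_{C₃} ≠ ∅. -/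
open WeakDual

variable (A : Type*) [CStarAlgebra A]

variable {A}

lemma isOpen_iff' (U : Set (SigmaSpace A)) : IsOpen U ↔
    ((∀ C : Context A, IsOpen {lam : C.Spec | Sigma.mk C lam ∈ U}) ∧
    ∀ (C C' : Context A) (h : C.carrier ≤ C'.carrier) (lam' : C'.Spec),
      Sigma.mk C (Context.restrictChar h lam') ∈ U → Sigma.mk C' lam' ∈ U) := Iff.rfl

lemma restrictChar_comp {C₀ C C' : Context A} (h₀ : C₀.carrier ≤ C.carrier)
    (h : C.carrier ≤ C'.carrier) (lam : C'.Spec) :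
    Context.restrictChar h₀ (Context.restrictChar h lam) =
      Context.restrictChar (h₀.trans h) lam := rfl

lemma restrictChar_refl {C : Context A} (lam : C.Spec) :
    Context.restrictChar (le_refl C.carrier) lam = lam := rfl

lemma restrictChar_continuous {D C : Context A} (h : D.carrier ≤ C.carrier) :
    Continuous (Context.restrictChar h (A := A)) := by
  apply Continuous.subtype_mk
  apply WeakDual.continuous_of_continuous_eval
  intro x
  show Continuous fun a : C.Spec => (a : WeakDual ℂ C.carrier) (Context.inclCLM h x)
  exact (WeakDual.eval_continuous _).comp continuous_subtype_val

lemma isOpen_upSet (C₀ : Context A) (V : Set C₀.Spec) (hV : IsOpen V) :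
    IsOpen {p : SigmaSpace A |
      ∃ h : C₀.carrier ≤ p.1.carrier, Context.restrictChar h p.2 ∈ V} := by
  rw [isOpen_iff']
  constructor
  · intro C
    by_cases hle : C₀.carrier ≤ C.carrier
    · have he : {lam : C.Spec | Sigma.mk C lam ∈ {p : SigmaSpace A |
          ∃ h : C₀.carrier ≤ p.1.carrier, Context.restrictChar h p.2 ∈ V}} =
          Context.restrictChar hle ⁻¹' V := by
        ext lam
        constructor
        · rintro ⟨h, hv⟩; exact hv
        · intro hv; exact ⟨hle, hv⟩
      rw [he]
      exact hV.preimage (restrictChar_continuous hle)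
    · have he : {lam : C.Spec | Sigma.mk C lam ∈ {p : SigmaSpace A |
          ∃ h : C₀.carrier ≤ p.1.carrier, Context.restrictChar h p.2 ∈ V}} = ∅ := by
        ext lam
        simp only [Set.mem_setOf_eq, Set.mem_empty_iff_false, iff_false]
        rintro ⟨h, _⟩; exact hle h
      rw [he]; exact isOpen_empty
  · rintro C C' h lam ⟨h₀, hv⟩
    exact ⟨h₀.trans h, by rw [← restrictChar_comp h₀ h lam]; exact hv⟩

lemma mem_of_closed_restrict {F : Set (SigmaSpace A)} (hFcl : IsClosed F)
    {C C' : Context A} (h : C.carrier ≤ C'.carrier) {lam : C'.Spec}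
    (hm : Sigma.mk C' lam ∈ F) : Sigma.mk C (Context.restrictChar h lam) ∈ F := by
  by_contra hc
  exact ((isOpen_iff' Fᶜ).mp hFcl.isOpen_compl).2 C C' h lam hc hm

/-- A nonempty closed subset `F` of `Σ_*` is irreducible if and only if
(1) every fibre `F_C` contains at most one point, and (2) the set of contexts with nonempty
fibre is upward directed. -/
theorem statement11 (F : Set (SigmaSpace A)) (hFcl : IsClosed F) (hFne : F.Nonempty) :
    IsIrreducible F ↔
      ((∀ C : Context A, {lam : C.Spec | (⟨C, lam⟩ : SigmaSpace A) ∈ F}.Subsingleton) ∧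
        ∀ C₁ C₂ : Context A, {lam : C₁.Spec | (⟨C₁, lam⟩ : SigmaSpace A) ∈ F}.Nonempty →
          {lam : C₂.Spec | (⟨C₂, lam⟩ : SigmaSpace A) ∈ F}.Nonempty →
          ∃ C₃ : Context A, C₁.carrier ≤ C₃.carrier ∧ C₂.carrier ≤ C₃.carrier ∧
            {lam : C₃.Spec | (⟨C₃, lam⟩ : SigmaSpace A) ∈ F}.Nonempty) := by
  constructor
  · rintro ⟨-, hpre⟩
    constructor
    · intro C lam hlam mu hmu
      by_contra hne
      obtain ⟨V, W, hV, hW, hlV, hmW, hdisj⟩ := t2_separation hne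
      have h1 : (F ∩ {p : SigmaSpace A |
          ∃ h : C.carrier ≤ p.1.carrier, Context.restrictChar h p.2 ∈ V}).Nonempty :=
        ⟨⟨C, lam⟩, hlam, ⟨le_refl _, hlV⟩⟩
      have h2 : (F ∩ {p : SigmaSpace A |
          ∃ h : C.carrier ≤ p.1.carrier, Context.restrictChar h p.2 ∈ W}).Nonempty :=
        ⟨⟨C, mu⟩, hmu, ⟨le_refl _, hmW⟩⟩
      obtain ⟨⟨C', nu⟩, -, ⟨hle, hvV⟩, ⟨hle', hvW⟩⟩ :=
        hpre _ _ (isOpen_upSet C V hV) (isOpen_upSet C W hW) h1 h2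
      exact Set.disjoint_iff.mp hdisj ⟨hvV, hvW⟩
    · rintro C₁ C₂ ⟨lam₁, h1⟩ ⟨lam₂, h2⟩
      have hU1 : (F ∩ {p : SigmaSpace A |
          ∃ h : C₁.carrier ≤ p.1.carrier, Context.restrictChar h p.2 ∈ Set.univ}).Nonempty :=
        ⟨⟨C₁, lam₁⟩, h1, ⟨le_refl _, trivial⟩⟩
      have hU2 : (F ∩ {p : SigmaSpace A |
          ∃ h : C₂.carrier ≤ p.1.carrier, Context.restrictChar h p.2 ∈ Set.univ}).Nonempty :=
        ⟨⟨C₂, lam₂⟩, h2, ⟨le_refl _, trivial⟩⟩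
      obtain ⟨⟨C₃, nu⟩, hF3, ⟨hle1, -⟩, ⟨hle2, -⟩⟩ :=
        hpre _ _ (isOpen_upSet C₁ _ isOpen_univ) (isOpen_upSet C₂ _ isOpen_univ) hU1 hU2
      exact ⟨C₃, hle1, hle2, ⟨nu, hF3⟩⟩
  · rintro ⟨hsub, hdir⟩
    refine ⟨hFne, ?_⟩
    intro U V hU hV hFU hFV
    obtain ⟨⟨C₁, lam₁⟩, hF1, hU1⟩ := hFU
    obtain ⟨⟨C₂, lam₂⟩, hF2, hV2⟩ := hFV
    obtain ⟨C₃, hle1, hle2, lam₃, hF3⟩ := hdir C₁ C₂ ⟨lam₁, hF1⟩ ⟨lam₂, hF2⟩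
    have hr1 : Context.restrictChar hle1 lam₃ = lam₁ :=
      hsub C₁ (mem_of_closed_restrict hFcl hle1 hF3) hF1
    have hr2 : Context.restrictChar hle2 lam₃ = lam₂ :=
      hsub C₂ (mem_of_closed_restrict hFcl hle2 hF3) hF2
    refine ⟨⟨C₃, lam₃⟩, hF3, ?_, ?_⟩
    · exact ((isOpen_iff' U).mp hU).2 C₁ C₃ hle1 lam₃ (by rw [hr1]; exact hU1)
    · exact ((isOpen_iff' V).mp hV).2 C₂ C₃ hle2 lam₃ (by rw [hr2]; exact hV2)
end

section
/- The map μ⁰_ψ satisfies: (0) for each open U ⊆ Σ_*, the function C ↦ μ⁰_ψ(U)(C) is order-preserving, i.e. C ⊆ C' implies μ⁰_ψ(U)(C) ≤ μ⁰_ψ(U)(C'); (1) monotonicity: if U ⊆ V are open then μ⁰_ψ(U)(C) ≤ μ⁰_ψ(V)(C) for every context C; (2) modularity: for all open U, V and every context C, μ⁰_ψ(U)(C) + μ⁰_ψ(V)(C) = μ⁰_ψ(U ∩ V)(C) + μ⁰_ψ(U ∪ V)(C); and (3) Scott continuity: for every nonempty family {U_i} of open subsets of Σ_* that is directed under inclusion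 and every context C, μ⁰_ψ(⋃_i U_i)(C) = sup_i μ⁰_ψ(U_i)(C). -/
open WeakDual

variable (A : Type*) [CStarAlgebra A]

variable {A}

variable {H : Type*} [NormedAddCommGroup H] [InnerProductSpace ℂ H] [CompleteSpace H]

/-- The orthogonal projection of `H` onto the line `ℂ ∙ ψ`, as a bounded operator on `H`. -/
noncomputable def lineProjection (ψ : H) : H →L[ℂ] H :=
  (ℂ ∙ ψ).subtypeL ∘L (ℂ ∙ ψ).orthogonalProjectionOnto

open Classical in
/-- The pseudo-state pairing `μ⁰_ψ`: it takes the value `1` at `(U, C)` iff for every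
context `C' ⊇ C` containing `p_ψ` the clopen set `X^{C'}_{p_ψ} = {λ : λ(p_ψ) = 1}` is
contained in the fibre `U_{C'}`, and the value `0` otherwise. -/
noncomputable def mu0 (ψ : H) (U : Set (SigmaSpace (H →L[ℂ] H)))
    (C : Context (H →L[ℂ] H)) : ℝ :=
  if ∀ C' : Context (H →L[ℂ] H), C.carrier ≤ C'.carrier →
      ∀ hp : lineProjection ψ ∈ C'.carrier, ∀ lam : C'.Spec,
        lam ⟨lineProjection ψ, hp⟩ = 1 → (⟨C', lam⟩ : SigmaSpace (H →L[ℂ] H)) ∈ U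
  then 1 else 0

set_option linter.unusedSectionVars false
set_option synthInstance.maxHeartbeats 1000000
set_option maxHeartbeats 1000000

lemma lineProjection_apply (ψ : H) (hψ : ‖ψ‖ = 1) (x : H) :
    lineProjection ψ x = (inner ℂ ψ x : ℂ) • ψ :=
  Submodule.starProjection_unit_singleton ℂ hψ x

lemma mul_lineProjection (ψ : H) (hψ : ‖ψ‖ = 1) (a : H →L[ℂ] H)
    (hc : a * lineProjection ψ = lineProjection ψ * a) :
    a * lineProjection ψ = (inner ℂ ψ (a ψ) : ℂ) • lineProjection ψ := by
  have hp2 : lineProjection ψ * lineProjection ψ = lineProjection ψ := by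
    ext x
    simp only [ContinuousLinearMap.mul_apply, lineProjection_apply ψ hψ, inner_smul_right,
      smul_smul]
    rw [inner_self_eq_norm_sq_to_K, hψ]
    norm_num
  have key : lineProjection ψ * (a * lineProjection ψ) =
      (inner ℂ ψ (a ψ) : ℂ) • lineProjection ψ := by
    ext x
    simp only [ContinuousLinearMap.mul_apply, ContinuousLinearMap.smul_apply,
      lineProjection_apply ψ hψ, map_smul, inner_smul_right, smul_smul]
    rw [mul_comm]
  calc a * lineProjection ψ = (a * lineProjection ψ) * lineProjection ψ := by
        rw [mul_assoc, hp2]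
    _ = lineProjection ψ * (a * lineProjection ψ) := by conv_lhs => rw [hc, mul_assoc]
    _ = (inner ℂ ψ (a ψ) : ℂ) • lineProjection ψ := key

/-- The proposition underlying `mu0`. -/
def PP (ψ : H) (U : Set (SigmaSpace (H →L[ℂ] H))) (C : Context (H →L[ℂ] H)) : Prop :=
  ∀ C' : Context (H →L[ℂ] H), C.carrier ≤ C'.carrier →
    ∀ hp : lineProjection ψ ∈ C'.carrier, ∀ lam : C'.Spec,
      lam ⟨lineProjection ψ, hp⟩ = 1 → (⟨C', lam⟩ : SigmaSpace (H →L[ℂ] H)) ∈ U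

open Classical in
lemma mu0_def (ψ : H) (U : Set (SigmaSpace (H →L[ℂ] H))) (C : Context (H →L[ℂ] H)) :
    mu0 ψ U C = if PP ψ U C then 1 else 0 := rfl

lemma char_apply (ψ : H) (hψ : ‖ψ‖ = 1) (C' : Context (H →L[ℂ] H))
    (hp : lineProjection ψ ∈ C'.carrier) (μ : C'.Spec)
    (hμ : μ ⟨lineProjection ψ, hp⟩ = 1) (x : C'.carrier) :
    μ x = (inner ℂ ψ (x.val ψ) : ℂ) := by
  have hc : x.val * lineProjection ψ = lineProjection ψ * x.val :=
    C'.mul_comm' x.val x.2 (lineProjection ψ) hp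
  have hop := mul_lineProjection ψ hψ x.val hc
  have hsub : (x * ⟨lineProjection ψ, hp⟩ : C'.carrier) =
      (inner ℂ ψ (x.val ψ) : ℂ) • (⟨lineProjection ψ, hp⟩ : C'.carrier) := Subtype.ext hop
  calc μ x = μ x * μ ⟨lineProjection ψ, hp⟩ := by rw [hμ, mul_one]
    _ = μ (x * ⟨lineProjection ψ, hp⟩) := (map_mul μ _ _).symm
    _ = μ ((inner ℂ ψ (x.val ψ) : ℂ) • ⟨lineProjection ψ, hp⟩) := by rw [hsub]
    _ = (inner ℂ ψ (x.val ψ) : ℂ) * μ ⟨lineProjection ψ, hp⟩ := by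
        rw [map_smul]; rfl
    _ = _ := by rw [hμ, mul_one]

lemma char_unique (ψ : H) (hψ : ‖ψ‖ = 1) (C' : Context (H →L[ℂ] H))
    (hp : lineProjection ψ ∈ C'.carrier) (μ ν : C'.Spec)
    (hμ : μ ⟨lineProjection ψ, hp⟩ = 1) (hν : ν ⟨lineProjection ψ, hp⟩ = 1) : μ = ν := by
  apply Subtype.ext
  apply ContinuousLinearMap.ext
  intro x
  show μ x = ν x
  rw [char_apply ψ hψ C' hp μ hμ x, char_apply ψ hψ C' hp ν hν x]

lemma restrictChar_apply {D C : Context (H →L[ℂ] H)} (h : D.carrier ≤ C.carrier)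
    (lam : C.Spec) (x : D.carrier) :
    Context.restrictChar h lam x = lam ⟨x.val, h x.2⟩ := rfl

/-- The smallest context above `C` containing the projection `p_ψ`, given a witness `C1`. -/
noncomputable def ctxInf (ψ : H) (C C1 : Context (H →L[ℂ] H))
    (h1 : C.carrier ≤ C1.carrier) (hp1 : lineProjection ψ ∈ C1.carrier) :
    Context (H →L[ℂ] H) where
  carrier := sInf {S | ∃ C' : Context (H →L[ℂ] H),
    S = C'.carrier ∧ C.carrier ≤ C'.carrier ∧ lineProjection ψ ∈ C'.carrier}
  star_mem' := fun x hx => Algebra.mem_sInf.2 fun S hS => by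
    obtain ⟨C', rfl, h⟩ := hS
    exact C'.star_mem' x (Algebra.mem_sInf.1 hx _ ⟨C', rfl, h⟩)
  isClosed' := by
    rw [Algebra.coe_sInf]
    refine isClosed_biInter ?_
    rintro S ⟨C', rfl, -⟩
    exact C'.isClosed'
  mul_comm' := fun x hx y hy =>
    C1.mul_comm' x (Algebra.mem_sInf.1 hx _ ⟨C1, rfl, h1, hp1⟩)
      y (Algebra.mem_sInf.1 hy _ ⟨C1, rfl, h1, hp1⟩)

lemma le_ctxInf (ψ : H) (C C1 : Context (H →L[ℂ] H))
    (h1 : C.carrier ≤ C1.carrier) (hp1 : lineProjection ψ ∈ C1.carrier) :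
    C.carrier ≤ (ctxInf ψ C C1 h1 hp1).carrier := fun x hx =>
  Algebra.mem_sInf.2 fun S hS => by
    obtain ⟨C', rfl, hC, -⟩ := hS
    exact hC hx

lemma proj_mem_ctxInf (ψ : H) (C C1 : Context (H →L[ℂ] H))
    (h1 : C.carrier ≤ C1.carrier) (hp1 : lineProjection ψ ∈ C1.carrier) :
    lineProjection ψ ∈ (ctxInf ψ C C1 h1 hp1).carrier :=
  Algebra.mem_sInf.2 fun S hS => by
    obtain ⟨C', rfl, -, hp⟩ := hS
    exact hp

lemma ctxInf_le (ψ : H) (C C1 : Context (H →L[ℂ] H))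
    (h1 : C.carrier ≤ C1.carrier) (hp1 : lineProjection ψ ∈ C1.carrier)
    (C' : Context (H →L[ℂ] H)) (h' : C.carrier ≤ C'.carrier)
    (hp' : lineProjection ψ ∈ C'.carrier) :
    (ctxInf ψ C C1 h1 hp1).carrier ≤ C'.carrier := fun x hx =>
  Algebra.mem_sInf.1 hx _ ⟨C', rfl, h', hp'⟩

/-- The canonical point of `Σ_*` associated to `ψ` above `C` (given witnesses). -/
noncomputable def ctxPt (ψ : H) (C C1 : Context (H →L[ℂ] H))
    (h1 : C.carrier ≤ C1.carrier) (hp1 : lineProjection ψ ∈ C1.carrier)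
    (lam1 : C1.Spec) : SigmaSpace (H →L[ℂ] H) :=
  ⟨ctxInf ψ C C1 h1 hp1,
    Context.restrictChar (ctxInf_le ψ C C1 h1 hp1 C1 h1 hp1) lam1⟩

lemma ctxPt_char (ψ : H) (C C1 : Context (H →L[ℂ] H))
    (h1 : C.carrier ≤ C1.carrier) (hp1 : lineProjection ψ ∈ C1.carrier)
    (lam1 : C1.Spec) (hlam1 : lam1 ⟨lineProjection ψ, hp1⟩ = 1) :
    (ctxPt ψ C C1 h1 hp1 lam1).2
      ⟨lineProjection ψ, proj_mem_ctxInf ψ C C1 h1 hp1⟩ = 1 := hlam1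

/-- The key characterisation: `PP ψ U C` holds iff the canonical point lies in `U`. -/
lemma PP_iff (ψ : H) (hψ : ‖ψ‖ = 1) (U : Set (SigmaSpace (H →L[ℂ] H))) (hU : IsOpen U)
    (C C1 : Context (H →L[ℂ] H)) (h1 : C.carrier ≤ C1.carrier)
    (hp1 : lineProjection ψ ∈ C1.carrier) (lam1 : C1.Spec)
    (hlam1 : lam1 ⟨lineProjection ψ, hp1⟩ = 1) :
    PP ψ U C ↔ ctxPt ψ C C1 h1 hp1 lam1 ∈ U := by
  constructor
  · intro hP
    exact hP (ctxInf ψ C C1 h1 hp1) (le_ctxInf ψ C C1 h1 hp1)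
      (proj_mem_ctxInf ψ C C1 h1 hp1) (ctxPt ψ C C1 h1 hp1 lam1).2
      (ctxPt_char ψ C C1 h1 hp1 lam1 hlam1)
  · intro hpt C' h' hp' lam' hlam'
    have hle := ctxInf_le ψ C C1 h1 hp1 C' h' hp'
    have heq : Context.restrictChar hle lam' = (ctxPt ψ C C1 h1 hp1 lam1).2 := by
      apply char_unique ψ hψ _ (proj_mem_ctxInf ψ C C1 h1 hp1)
      · exact hlam'
      · exact ctxPt_char ψ C C1 h1 hp1 lam1 hlam1
    exact hU.2 _ C' hle lam' (by rw [heq]; exact hpt)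

open Classical in
lemma biSup_indicator {σ : Type*} (𝒰 : Set (Set σ)) (f : Set σ → ℝ)
    (hf : ∀ U, f U = 0 ∨ f U = 1) :
    (⨆ U ∈ 𝒰, f U) = if ∃ U ∈ 𝒰, f U = 1 then 1 else 0 := by
  have hle1' : ∀ U, f U ≤ 1 := fun U => by rcases hf U with h | h <;> rw [h] <;> norm_num
  have hnn' : ∀ U, 0 ≤ f U := fun U => by rcases hf U with h | h <;> rw [h] <;> norm_num
  have hle1 : ∀ U : Set σ, (⨆ _ : U ∈ 𝒰, f U) ≤ 1 :=
    fun U => Real.iSup_le (fun _ => hle1' U) one_pos.le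
  have hnn : ∀ U : Set σ, 0 ≤ (⨆ _ : U ∈ 𝒰, f U) :=
    fun U => Real.iSup_nonneg (fun _ => hnn' U)
  split_ifs with h
  · obtain ⟨U0, hU0, hfU0⟩ := h
    refine le_antisymm (Real.iSup_le hle1 one_pos.le) ?_
    have h2 : f U0 ≤ ⨆ _ : U0 ∈ 𝒰, f U0 :=
      le_ciSup (f := fun _ : U0 ∈ 𝒰 => f U0)
        ⟨f U0, by rintro x ⟨_, rfl⟩; exact le_rfl⟩ hU0
    have h3 : (⨆ _ : U0 ∈ 𝒰, f U0) ≤ ⨆ U ∈ 𝒰, f U :=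
      le_ciSup (f := fun U : Set σ => ⨆ _ : U ∈ 𝒰, f U)
        ⟨1, by rintro x ⟨U, rfl⟩; exact hle1 U⟩ U0
    calc (1 : ℝ) = f U0 := hfU0.symm
      _ ≤ _ := h2.trans h3
  · push_neg at h
    refine le_antisymm (Real.iSup_le (fun U => ?_) le_rfl) (Real.iSup_nonneg hnn)
    refine Real.iSup_le (fun hU => ?_) le_rfl
    rcases hf U with h0 | h1
    · rw [h0]
    · exact absurd h1 (h U hU)

lemma mu0_nonneg (ψ : H) (U : Set (SigmaSpace (H →L[ℂ] H))) (C : Context (H →L[ℂ] H)) :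
    0 ≤ mu0 ψ U C := by
  rw [mu0_def]; split_ifs <;> norm_num

lemma mu0_zero_or_one (ψ : H) (U : Set (SigmaSpace (H →L[ℂ] H)))
    (C : Context (H →L[ℂ] H)) : mu0 ψ U C = 0 ∨ mu0 ψ U C = 1 := by
  rw [mu0_def]; split_ifs <;> simp

/-- Let `ψ` be a unit vector of the Hilbert space `H` and let
`A = B(H)`. The map `μ⁰_ψ` satisfies: (0) for each open `U`, the function `C ↦ μ⁰_ψ(U)(C)`
is order-preserving; (1) monotonicity in `U`; (2) modularity; and (3) Scott continuity with
respect to directed families of opens. -/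
theorem statement19 (ψ : H) (hψ : ‖ψ‖ = 1) :
    (∀ U : Set (SigmaSpace (H →L[ℂ] H)), IsOpen U →
      ∀ C C' : Context (H →L[ℂ] H), C.carrier ≤ C'.carrier →
        mu0 ψ U C ≤ mu0 ψ U C') ∧
    (∀ U V : Set (SigmaSpace (H →L[ℂ] H)), IsOpen U → IsOpen V → U ⊆ V →
      ∀ C : Context (H →L[ℂ] H), mu0 ψ U C ≤ mu0 ψ V C) ∧
    (∀ U V : Set (SigmaSpace (H →L[ℂ] H)), IsOpen U → IsOpen V →
      ∀ C : Context (H →L[ℂ] H),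
        mu0 ψ U C + mu0 ψ V C = mu0 ψ (U ∩ V) C + mu0 ψ (U ∪ V) C) ∧
    (∀ 𝒰 : Set (Set (SigmaSpace (H →L[ℂ] H))), 𝒰.Nonempty → (∀ U ∈ 𝒰, IsOpen U) →
      DirectedOn (· ⊆ ·) 𝒰 →
      ∀ C : Context (H →L[ℂ] H), mu0 ψ (⋃₀ 𝒰) C = ⨆ U ∈ 𝒰, mu0 ψ U C) := by
  classical
  refine ⟨?_, ?_, ?_, ?_⟩
  · -- (0) order-preserving in C
    intro U _ C C' hCC'
    by_cases h : PP ψ U C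
    · have h' : PP ψ U C' := fun D hD => h D (hCC'.trans hD)
      rw [mu0_def, mu0_def, if_pos h, if_pos h']
    · rw [mu0_def, if_neg h]
      exact mu0_nonneg ψ U C'
  · -- (1) monotone in U
    intro U V _ _ hUV C
    by_cases h : PP ψ U C
    · have h' : PP ψ V C := fun D hD hp lam hlam => hUV (h D hD hp lam hlam)
      rw [mu0_def, mu0_def, if_pos h, if_pos h']
    · rw [mu0_def, if_neg h]
      exact mu0_nonneg ψ V C
  · -- (2) modularity
    intro U V hU hV C
    by_cases hex : ∃ C1 : Context (H →L[ℂ] H), ∃ h1 : C.carrier ≤ C1.carrier,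
        ∃ hp1 : lineProjection ψ ∈ C1.carrier, ∃ lam1 : C1.Spec,
          lam1 ⟨lineProjection ψ, hp1⟩ = 1
    · obtain ⟨C1, h1, hp1, lam1, hlam1⟩ := hex
      set pt := ctxPt ψ C C1 h1 hp1 lam1 with hpt
      have eU : mu0 ψ U C = if pt ∈ U then 1 else 0 := by
        rw [mu0_def]; exact if_congr (PP_iff ψ hψ U hU C C1 h1 hp1 lam1 hlam1) rfl rfl
      have eV : mu0 ψ V C = if pt ∈ V then 1 else 0 := by
        rw [mu0_def]; exact if_congr (PP_iff ψ hψ V hV C C1 h1 hp1 lam1 hlam1) rfl rfl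
      have eUV : mu0 ψ (U ∩ V) C = if pt ∈ U ∩ V then 1 else 0 := by
        rw [mu0_def]
        exact if_congr (PP_iff ψ hψ (U ∩ V) (hU.inter hV) C C1 h1 hp1 lam1 hlam1) rfl rfl
      have eUuV : mu0 ψ (U ∪ V) C = if pt ∈ U ∪ V then 1 else 0 := by
        rw [mu0_def]
        exact if_congr (PP_iff ψ hψ (U ∪ V) (hU.union hV) C C1 h1 hp1 lam1 hlam1) rfl rfl
      rw [eU, eV, eUV, eUuV]
      by_cases pU : pt ∈ U <;> by_cases pV : pt ∈ V <;>
        simp [pU, pV, Set.mem_inter_iff, Set.mem_union]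
    · have hall : ∀ W : Set (SigmaSpace (H →L[ℂ] H)), PP ψ W C :=
        fun W C' h' hp' lam' hlam' => absurd ⟨C', h', hp', lam', hlam'⟩ hex
      have e : ∀ W : Set (SigmaSpace (H →L[ℂ] H)), mu0 ψ W C = 1 :=
        fun W => by rw [mu0_def, if_pos (hall W)]
      rw [e U, e V, e (U ∩ V), e (U ∪ V)]
  · -- (3) Scott continuity
    intro 𝒰 hne hop _ C
    rw [biSup_indicator 𝒰 (fun U => mu0 ψ U C) (fun U => mu0_zero_or_one ψ U C)]
    by_cases hex : ∃ C1 : Context (H →L[ℂ] H), ∃ h1 : C.carrier ≤ C1.carrier,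
        ∃ hp1 : lineProjection ψ ∈ C1.carrier, ∃ lam1 : C1.Spec,
          lam1 ⟨lineProjection ψ, hp1⟩ = 1
    · obtain ⟨C1, h1, hp1, lam1, hlam1⟩ := hex
      set pt := ctxPt ψ C C1 h1 hp1 lam1 with hpt
      have eW : ∀ W : Set (SigmaSpace (H →L[ℂ] H)), IsOpen W →
          (mu0 ψ W C = if pt ∈ W then 1 else 0) := fun W hW => by
        rw [mu0_def]; exact if_congr (PP_iff ψ hψ W hW C C1 h1 hp1 lam1 hlam1) rfl rfl
      rw [eW (⋃₀ 𝒰) (isOpen_sUnion hop)]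
      have hiff : (pt ∈ ⋃₀ 𝒰) ↔ ∃ U ∈ 𝒰, mu0 ψ U C = 1 := by
        constructor
        · rintro ⟨U, hU𝒰, hptU⟩
          exact ⟨U, hU𝒰, by rw [eW U (hop U hU𝒰), if_pos hptU]⟩
        · rintro ⟨U, hU𝒰, h1'⟩
          refine ⟨U, hU𝒰, ?_⟩
          rw [eW U (hop U hU𝒰)] at h1'
          by_contra hcon
          rw [if_neg hcon] at h1'
          norm_num at h1'
      by_cases hm : pt ∈ ⋃₀ 𝒰
      · rw [if_pos hm, if_pos (hiff.1 hm)]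
      · rw [if_neg hm, if_neg (fun hc => hm (hiff.2 hc))]
    · have hall : ∀ W : Set (SigmaSpace (H →L[ℂ] H)), PP ψ W C :=
        fun W C' h' hp' lam' hlam' => absurd ⟨C', h', hp', lam', hlam'⟩ hex
      obtain ⟨U0, hU0⟩ := hne
      have e : ∀ W : Set (SigmaSpace (H →L[ℂ] H)), mu0 ψ W C = 1 :=
        fun W => by rw [mu0_def, if_pos (hall W)]
      rw [e (⋃₀ 𝒰), if_pos ⟨U0, hU0, e U0⟩]
end
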